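/- Let $f : \mathbb{C} \to \mathbb{C}$ be entire with $\int_0^\infty |f(x - t)| \, dt < \infty$ locally uniformly in $x$, and suppose $\int_0^\infty |f(x-t)| t^{\sigma-1} dt < \infty$ for all $0 < \sigma < 1$. Then for $0 < \Re(z) < 1$, $\Gamma(z) \cdot \frac{1}{\Gamma(z)}\int_0^\infty f(x-t)t^{z-1}dt = \sum_{n=0}^\infty f^{(n)}(x)\frac{(-1)^n}{n!(n+z)} + \int_1^\infty f(x-t)t^{z-1}dt$, and the right-hand side defines a holomorphic function of $z$ on $\{\Re(z) < 1\} \setminus \{0,-1,-2,\dots\}$. -/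

import Mathlib

open MeasureTheory Complex Set Filter Metric

lemma euler_aux_summable (f : ℂ → ℂ) (hf : Differentiable ℂ f) (x : ℂ) :
    Summable (fun n : ℕ => ‖iteratedDeriv n f x‖ / n.factorial) := by
  set p := cauchyPowerSeries f x (2 : NNReal) with hp
  have hd : HasFPowerSeriesOnBall f p x (2 : NNReal) :=
    DifferentiableOn.hasFPowerSeriesOnBall (R := 2) hf.differentiableOn two_pos
  have hrad : (1 : ENNReal) < p.radius :=
    lt_of_lt_of_le (by norm_num) hd.r_le
  have hs : Summable fun n => ‖p n‖ * (1:ℝ) ^ n :=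
    p.summable_norm_mul_pow (r := 1) (by exact_mod_cast hrad)
  simp only [one_pow, mul_one] at hs
  refine hs.of_nonneg_of_le (fun n => by positivity) (fun n => ?_)
  have h1 : iteratedDeriv n f x = iteratedFDeriv ℂ n f x (fun _ => 1) :=
    iteratedDeriv_eq_iteratedFDeriv
  have h2 := hd.factorial_smul (1 : ℂ) n
  rw [div_le_iff₀ (by positivity), h1, ← h2, nsmul_eq_mul, norm_mul]
  simp only [norm_natCast]
  rw [mul_comm]
  gcongr
  calc ‖(p n) (fun _ => 1)‖
      ≤ ‖p n‖ * ∏ _i : Fin n, ‖(1:ℂ)‖ := (p n).le_opNorm _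
    _ = ‖p n‖ := by simp

lemma euler_meas (f : ℂ → ℂ) (hf : Differentiable ℂ f) (x : ℂ) (z : ℂ) {a : ℝ} (ha : 0 ≤ a) :
    AEStronglyMeasurable (fun t : ℝ => f (x - t) * (t:ℂ) ^ (z - 1))
      (volume.restrict (Ioi a)) := by
  refine ContinuousOn.aestronglyMeasurable (fun t ht => ?_) measurableSet_Ioi
  have ht0 : 0 < t := lt_of_le_of_lt ha ht
  exact (((hf.continuous.comp (continuous_const.sub continuous_ofReal)).continuousAt).mul
    (continuousAt_ofReal_cpow_const t _ (Or.inr ht0.ne'))).continuousWithinAt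

lemma euler_norm_eq (f : ℂ → ℂ) (x : ℂ) (z : ℂ) {t : ℝ} (ht : 0 < t) :
    ‖f (x - t) * (t:ℂ) ^ (z - 1)‖ = ‖f (x - t)‖ * t ^ (z.re - 1) := by
  rw [norm_mul, Complex.norm_cpow_eq_rpow_re_of_pos ht]
  simp [Complex.sub_re]

lemma euler_integrableOn (f : ℂ → ℂ) (hf : Differentiable ℂ f) (x : ℂ)
    (hint' : ∀ σ : ℝ, 0 < σ → σ < 1 →
      Integrable (fun t : ℝ => ‖f (x - t)‖ * t ^ (σ - 1)) (volume.restrict (Set.Ioi 0)))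
    (z : ℂ) (hz0 : 0 < z.re) (hz1 : z.re < 1) :
    IntegrableOn (fun t : ℝ => f (x - t) * (t:ℂ) ^ (z - 1)) (Ioi (0:ℝ)) := by
  refine (hint' z.re hz0 hz1).mono (euler_meas f hf x z le_rfl) ?_
  filter_upwards [ae_restrict_mem measurableSet_Ioi] with t ht
  rw [euler_norm_eq f x z ht, Real.norm_eq_abs]; exact le_abs_self _

lemma euler_middle (f : ℂ → ℂ) (hf : Differentiable ℂ f) (x : ℂ)
    (z : ℂ) (hz0 : 0 < z.re) (hz1 : z.re < 1) :
    ∫ t in Ioc (0:ℝ) 1, f (x - t) * (t:ℂ) ^ (z - 1) =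
      ∑' n : ℕ, iteratedDeriv n f x * (-1:ℂ)^n / (n.factorial * (n + z)) := by
  set a : ℕ → ℂ := fun n => iteratedDeriv n f x with ha
  set G : ℕ → ℝ → ℂ := fun n t =>
    ((-1:ℂ)^n * (n.factorial : ℂ)⁻¹ * a n) * (t:ℂ) ^ ((n:ℂ) + z - 1) with hG
  have hre : ∀ n : ℕ, (-1:ℝ) < ((n:ℂ) + z - 1).re := by
    intro n
    have : (0:ℝ) ≤ n := n.cast_nonneg
    simp only [Complex.add_re, Complex.sub_re, Complex.natCast_re, Complex.one_re]
    linarith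
  have hGint : ∀ n : ℕ, Integrable (G n) (volume.restrict (Ioc (0:ℝ) 1)) := by
    intro n
    have h := intervalIntegral.intervalIntegrable_cpow' (a := 0) (b := 1) (r := (n:ℂ) + z - 1) (hre n)
    rw [intervalIntegrable_iff_integrableOn_Ioc_of_le zero_le_one] at h
    exact h.const_mul _
  have hrpowint : IntegrableOn (fun t : ℝ => t ^ (z.re - 1)) (Ioc (0:ℝ) 1) := by
    have h := intervalIntegral.intervalIntegrable_rpow' (a := 0) (b := 1) (r := z.re - 1)
      (by linarith)
    rwa [intervalIntegrable_iff_integrableOn_Ioc_of_le zero_le_one] at h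
  have hrpowval : ∫ t in Ioc (0:ℝ) 1, t ^ (z.re - 1) = 1 / z.re := by
    rw [← intervalIntegral.integral_of_le zero_le_one,
      integral_rpow (Or.inl (by linarith))]
    rw [sub_add_cancel, Real.one_rpow, Real.zero_rpow hz0.ne']
    ring
  have hGnorm : ∀ n : ℕ, ∀ t ∈ Ioc (0:ℝ) 1,
      ‖G n t‖ = (‖a n‖ / n.factorial) * t ^ ((n:ℝ) + z.re - 1) := by
    intro n t ht
    rw [hG]
    simp only [norm_mul]
    rw [Complex.norm_cpow_eq_rpow_re_of_pos ht.1]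
    simp only [norm_pow, norm_neg, norm_one, one_pow, one_mul, norm_inv, norm_natCast,
      Complex.sub_re, Complex.add_re, Complex.natCast_re, Complex.one_re]
    ring
  have hGnormle : ∀ n : ℕ, ∫ t in Ioc (0:ℝ) 1, ‖G n t‖ ≤ (‖a n‖ / n.factorial) * (1 / z.re) := by
    intro n
    have hle : ∀ t ∈ Ioc (0:ℝ) 1, ‖G n t‖ ≤ (‖a n‖ / n.factorial) * t ^ (z.re - 1) := by
      intro t ht
      rw [hGnorm n t ht]
      have hn : (0:ℝ) ≤ n := n.cast_nonneg
      exact mul_le_mul_of_nonneg_left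
        (Real.rpow_le_rpow_of_exponent_ge ht.1 ht.2 (by linarith)) (by positivity)
    calc ∫ t in Ioc (0:ℝ) 1, ‖G n t‖
        ≤ ∫ t in Ioc (0:ℝ) 1, (‖a n‖ / n.factorial) * t ^ (z.re - 1) :=
          setIntegral_mono_on (hGint n).norm (hrpowint.const_mul _) measurableSet_Ioc hle
      _ = (‖a n‖ / n.factorial) * (1 / z.re) := by
          rw [integral_const_mul, hrpowval]
  have hsumnorm : Summable fun n : ℕ => ∫ t in Ioc (0:ℝ) 1, ‖G n t‖ := by
    refine Summable.of_nonneg_of_le (fun n => ?_) (fun n => hGnormle n)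
      ((euler_aux_summable f hf x).mul_right (1 / z.re))
    positivity
  have hHS : HasSum (fun n : ℕ => ∫ t in Ioc (0:ℝ) 1, G n t)
      (∫ t in Ioc (0:ℝ) 1, ∑' n : ℕ, G n t) :=
    hasSum_integral_of_summable_integral_norm hGint hsumnorm
  have hcongr : ∫ t in Ioc (0:ℝ) 1, ∑' n : ℕ, G n t
      = ∫ t in Ioc (0:ℝ) 1, f (x - t) * (t:ℂ) ^ (z - 1) := by
    refine integral_congr_ae ?_
    filter_upwards [ae_restrict_mem measurableSet_Ioc] with t ht
    have hts := (hasSum_taylorSeries_of_entire hf x (x - t)).mul_right ((t:ℂ) ^ (z - 1))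
    have htne : (t:ℂ) ≠ 0 := by exact_mod_cast ht.1.ne'
    have heq : ∀ n : ℕ, G n t
        = ((n.factorial : ℂ)⁻¹ • (x - ↑t - x) ^ n • iteratedDeriv n f x) * ↑t ^ (z - 1) := by
      intro n
      rw [hG]
      simp only [smul_eq_mul, sub_sub_cancel_left]
      rw [show (n:ℂ) + z - 1 = (n:ℂ) + (z - 1) by ring, Complex.cpow_add _ _ htne,
        Complex.cpow_natCast, neg_pow]
      ring
    rw [tsum_congr heq]
    exact hts.tsum_eq
  have hnz : ∀ n : ℕ, ((n:ℂ) + z) ≠ 0 := fun n h => by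
    have h1 : (n:ℝ) + z.re = 0 := by
      have := congrArg Complex.re h
      simpa using this
    have h2 : (0:ℝ) ≤ n := n.cast_nonneg
    linarith
  have hGval : ∀ n : ℕ, (∫ t in Ioc (0:ℝ) 1, G n t)
      = a n * (-1:ℂ)^n / (n.factorial * (n + z)) := by
    intro n
    rw [hG]
    simp only []
    rw [integral_const_mul]
    have hcval : (∫ t in Ioc (0:ℝ) 1, (t:ℂ) ^ ((n:ℂ) + z - 1)) = 1 / ((n:ℂ) + z) := by
      rw [← intervalIntegral.integral_of_le zero_le_one, integral_cpow (Or.inl (hre n))]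
      have he : ((n:ℂ) + z - 1) + 1 = (n:ℂ) + z := by ring
      rw [he]
      norm_num [Complex.zero_cpow (hnz n), Complex.one_cpow]
    rw [hcval]
    have hfac : (n.factorial : ℂ) ≠ 0 := Nat.cast_ne_zero.mpr n.factorial_ne_zero
    field_simp
  calc ∫ t in Ioc (0:ℝ) 1, f (x - ↑t) * ↑t ^ (z-1)
      = ∑' n : ℕ, ∫ t in Ioc (0:ℝ) 1, G n t := by rw [← hcongr]; exact hHS.tsum_eq.symm
    _ = ∑' n : ℕ, a n * (-1:ℂ)^n / (n.factorial * (n + z)) := tsum_congr hGval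

lemma euler_part1 (f : ℂ → ℂ) (hf : Differentiable ℂ f) (x : ℂ)
    (hint' : ∀ σ : ℝ, 0 < σ → σ < 1 →
      Integrable (fun t : ℝ => ‖f (x - t)‖ * t ^ (σ - 1)) (volume.restrict (Set.Ioi 0)))
    (z : ℂ) (hz0 : 0 < z.re) (hz1 : z.re < 1) :
    ∫ t in Set.Ioi (0 : ℝ), f (x - t) * (t : ℂ) ^ (z - 1) =
      (∑' n : ℕ, iteratedDeriv n f x * (-1 : ℂ) ^ n / (n.factorial * (n + z))) +
        ∫ t in Set.Ioi (1 : ℝ), f (x - t) * (t : ℂ) ^ (z - 1) := by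
  have hInt := euler_integrableOn f hf x hint' z hz0 hz1
  rw [← Ioc_union_Ioi_eq_Ioi (zero_le_one (α := ℝ)),
    setIntegral_union Ioc_disjoint_Ioi_same measurableSet_Ioi
      (hInt.mono_set Ioc_subset_Ioi_self) (hInt.mono_set (Ioi_subset_Ioi zero_le_one)),
    euler_middle f hf x z hz0 hz1]

lemma euler_isClosed_T : IsClosed (Set.range fun n : ℕ => -(n:ℂ)) := by
  refine (isClosedEmbedding_of_pairwise_le_dist zero_lt_one ?_).isClosed_range
  intro m n hmn
  have h : (1:ℝ) ≤ dist (m:ℝ) (n:ℝ) := Nat.pairwise_one_le_dist hmn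
  rw [dist_neg_neg, show ((m:ℂ)) = ((m:ℝ):ℂ) by norm_num,
    show ((n:ℂ)) = ((n:ℝ):ℂ) by norm_num, Complex.isometry_ofReal.dist_eq]
  exact h

lemma euler_isOpen_S : IsOpen {z : ℂ | z.re < 1 ∧ ∀ n : ℕ, z ≠ -n} := by
  have : {z : ℂ | z.re < 1 ∧ ∀ n : ℕ, z ≠ -n}
      = (Complex.re ⁻¹' Iio 1) ∩ (Set.range fun n : ℕ => -(n:ℂ))ᶜ := by
    ext z
    simp only [Set.mem_setOf_eq, Set.mem_inter_iff, Set.mem_preimage, Set.mem_Iio,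
      Set.mem_compl_iff, Set.mem_range, not_exists]
    refine and_congr_right fun _ => ⟨fun h n hn => h n hn.symm, fun h n hn => h n hn.symm⟩
  rw [this]
  exact (isOpen_Iio.preimage Complex.continuous_re).inter euler_isClosed_T.isOpen_compl

lemma euler_tsum_diff (f : ℂ → ℂ) (hf : Differentiable ℂ f) (x : ℂ) :
    DifferentiableOn ℂ
      (fun z : ℂ => ∑' n : ℕ, iteratedDeriv n f x * (-1 : ℂ) ^ n / (n.factorial * (n + z)))
      {z : ℂ | z.re < 1 ∧ ∀ n : ℕ, z ≠ -n} := by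
  intro z₀ hz₀
  refine DifferentiableAt.differentiableWithinAt ?_
  set T := Set.range fun n : ℕ => -(n:ℂ) with hTdef
  have hT : IsClosed T := euler_isClosed_T
  have hz₀T : z₀ ∉ T := by
    rintro ⟨n, hn⟩
    exact hz₀.2 n hn.symm
  have hδ : 0 < infDist z₀ T := (hT.notMem_iff_infDist_pos ⟨0, ⟨0, by norm_num⟩⟩).mp hz₀T
  set δ := infDist z₀ T with hδdef
  have key : ∀ z ∈ closedBall z₀ (δ/2), ∀ n : ℕ, δ/2 ≤ ‖(n:ℂ) + z‖ := by
    intro z hz n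
    have h1 : infDist z T ≤ dist z (-(n:ℂ)) := infDist_le_dist_of_mem ⟨n, rfl⟩
    have h2 : δ ≤ infDist z T + dist z₀ z := infDist_le_infDist_add_dist
    have h3 : dist z₀ z ≤ δ/2 := by rw [dist_comm]; exact mem_closedBall.mp hz
    have h4 : dist z (-(n:ℂ)) = ‖(n:ℂ) + z‖ := by
      rw [dist_eq_norm, sub_neg_eq_add, add_comm]
    linarith
  set u : ℕ → ℝ := fun n => (‖iteratedDeriv n f x‖ / n.factorial) * (2/δ) with hu'
  have hu : Summable u := (euler_aux_summable f hf x).mul_right _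
  have hbound : ∀ n : ℕ, ∀ z ∈ closedBall z₀ (δ/2),
      ‖iteratedDeriv n f x * (-1:ℂ)^n / (n.factorial * ((n:ℂ) + z))‖ ≤ u n := by
    intro n z hz
    have h1 : δ/2 ≤ ‖(n:ℂ) + z‖ := key z hz n
    rw [norm_div, norm_mul, norm_mul, norm_pow, norm_neg, norm_one, one_pow, mul_one,
      _root_.norm_natCast]
    calc ‖iteratedDeriv n f x‖ / (↑n.factorial * ‖(n:ℂ)+z‖)
        ≤ ‖iteratedDeriv n f x‖ / (↑n.factorial * (δ/2)) := by
          have hfac : (0:ℝ) < n.factorial := by positivity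
          gcongr <;> first | positivity | exact h1
      _ = u n := by
          rw [hu']
          have : (n.factorial : ℝ) ≠ 0 := by positivity
          field_simp
  have hTU := tendstoUniformlyOn_tsum_nat hu hbound
  have hdiff : ∀ N : ℕ, DifferentiableOn ℂ
      (fun z => ∑ n ∈ Finset.range N,
        iteratedDeriv n f x * (-1:ℂ)^n / (n.factorial * ((n:ℂ)+z)))
      (ball z₀ (δ/2)) := by
    intro N
    apply DifferentiableOn.fun_sum
    intro n _
    intro z hz
    have h2 : (0:ℝ) < ‖(n:ℂ)+z‖ :=
      lt_of_lt_of_le (by positivity) (key z (ball_subset_closedBall hz) n)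
    have h1 : ((n.factorial : ℂ) * ((n:ℂ) + z)) ≠ 0 :=
      mul_ne_zero (Nat.cast_ne_zero.mpr n.factorial_ne_zero) (norm_pos_iff.mp h2)
    exact ((differentiableAt_const _).div
      (((differentiableAt_id.const_add ((n:ℂ))).const_mul _)) h1).differentiableWithinAt
  have hres := (hTU.tendstoLocallyUniformlyOn.mono ball_subset_closedBall).differentiableOn
    (Eventually.of_forall hdiff) isOpen_ball
  exact hres.differentiableAt (isOpen_ball.mem_nhds (mem_ball_self (by positivity)))

set_option maxHeartbeats 1000000 in
lemma euler_int_diff (f : ℂ → ℂ) (hf : Differentiable ℂ f) (x : ℂ)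
    (hint : Integrable (fun t : ℝ => ‖f (x - t)‖) (volume.restrict (Set.Ioi 0))) :
    DifferentiableOn ℂ
      (fun z : ℂ => ∫ t in Set.Ioi (1:ℝ), f (x - t) * (t:ℂ) ^ (z - 1))
      {z : ℂ | z.re < 1 ∧ ∀ n : ℕ, z ≠ -n} := by
  intro z₀ hz₀
  refine DifferentiableAt.differentiableWithinAt ?_
  obtain ⟨hz₀1, -⟩ := hz₀
  set ε := (1 - z₀.re)/2 with hε
  have hε0 : 0 < ε := by rw [hε]; linarith
  have hint1 : Integrable (fun t : ℝ => ‖f (x - t)‖) (volume.restrict (Ioi (1:ℝ))) :=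
    hint.mono_measure (Measure.restrict_mono (Ioi_subset_Ioi zero_le_one) le_rfl)
  have hmeas : ∀ z : ℂ, AEStronglyMeasurable (fun t : ℝ => f (x - t) * (t:ℂ) ^ (z - 1))
      (volume.restrict (Ioi (1:ℝ))) := fun z => euler_meas f hf x z zero_le_one
  have hFint : Integrable (fun t : ℝ => f (x - t) * (t:ℂ) ^ (z₀ - 1))
      (volume.restrict (Ioi (1:ℝ))) := by
    refine hint1.mono (hmeas z₀) ?_
    filter_upwards [ae_restrict_mem measurableSet_Ioi] with t ht
    rw [euler_norm_eq f x z₀ (lt_trans zero_lt_one ht), Real.norm_eq_abs, abs_norm]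
    have h1 : t ^ (z₀.re - 1) ≤ 1 :=
      Real.rpow_le_one_of_one_le_of_nonpos (le_of_lt ht) (by linarith)
    exact mul_le_of_le_one_right (norm_nonneg _) h1
  have hF'meas : AEStronglyMeasurable
      (fun t : ℝ => f (x - t) * ((t:ℂ) ^ (z₀ - 1) * Complex.log t))
      (volume.restrict (Ioi (1:ℝ))) := by
    refine ContinuousOn.aestronglyMeasurable (fun t ht => ?_) measurableSet_Ioi
    have ht0 : (0:ℝ) < t := lt_trans zero_lt_one ht
    refine ContinuousWithinAt.mul ?_ (ContinuousWithinAt.mul ?_ ?_)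
    · exact ((hf.continuous.comp (continuous_const.sub continuous_ofReal)).continuousAt
        ).continuousWithinAt
    · exact (continuousAt_ofReal_cpow_const t _ (Or.inr ht0.ne')).continuousWithinAt
    · refine ((continuousAt_clog ?_).comp continuous_ofReal.continuousAt
        ).continuousWithinAt
      exact Or.inl (by simpa using ht0)
  have hbound : ∀ᵐ (t : ℝ) ∂(volume.restrict (Ioi (1:ℝ))), ∀ z ∈ ball z₀ ε,
      ‖f (x - t) * ((t:ℂ) ^ (z - 1) * Complex.log t)‖ ≤ (2/ε) * ‖f (x - t)‖ := by
    filter_upwards [ae_restrict_mem measurableSet_Ioi] with t ht z hz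
    have ht0 : (0:ℝ) < t := lt_trans zero_lt_one ht
    have ht1 : (1:ℝ) ≤ t := le_of_lt ht
    have hlog : Complex.log (t:ℂ) = ((Real.log t : ℝ) : ℂ) := (Complex.ofReal_log ht0.le).symm
    rw [norm_mul, norm_mul, hlog,
      Complex.norm_cpow_eq_rpow_re_of_pos ht0, Complex.norm_real, Real.norm_eq_abs,
      _root_.abs_of_nonneg (Real.log_nonneg ht1)]
    have hzre : z.re - 1 ≤ -ε := by
      have h2 : |(z - z₀).re| ≤ ‖z - z₀‖ := Complex.abs_re_le_norm _
      have h3 : ‖z - z₀‖ < ε := by rwa [mem_ball, dist_eq_norm] at hz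
      have h4 : z.re - z₀.re ≤ ε := by
        have := abs_le.mp (le_of_lt (lt_of_le_of_lt h2 h3))
        simpa [Complex.sub_re] using this.2
      rw [hε] at *
      linarith
    have hc1 : ((t:ℝ)) ^ ((z - 1).re) ≤ t ^ (-ε) := by
      rw [show (z - 1).re = z.re - 1 by simp [Complex.sub_re]]
      exact Real.rpow_le_rpow_of_exponent_le ht1 hzre
    have hc2 : Real.log t ≤ t ^ (ε/2) / (ε/2) :=
      Real.log_le_rpow_div ht0.le (half_pos hε0)
    have hc3 : t ^ (-ε) * (t ^ (ε/2) / (ε/2)) = (2/ε) * t ^ (-ε/2) := by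
      have h5 : t ^ (-ε) * t ^ (ε/2) = t ^ (-ε/2) := by
        rw [← Real.rpow_add ht0, show -ε + ε/2 = -ε/2 by ring]
      calc t ^ (-ε) * (t ^ (ε/2) / (ε/2)) = (t ^ (-ε) * t ^ (ε/2)) / (ε/2) := by ring
        _ = t ^ (-ε/2) / (ε/2) := by rw [h5]
        _ = (2/ε) * t ^ (-ε/2) := by
            rw [div_eq_mul_inv, inv_div, mul_comm]
    have hc4 : t ^ (-ε/2) ≤ 1 :=
      Real.rpow_le_one_of_one_le_of_nonpos ht1 (by linarith)
    calc ‖f (x - t)‖ * (t ^ ((z-1).re) * Real.log t)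
        ≤ ‖f (x - t)‖ * (t ^ (-ε) * (t ^ (ε/2) / (ε/2))) := by
          refine mul_le_mul_of_nonneg_left ?_ (norm_nonneg _)
          refine mul_le_mul hc1 hc2 (Real.log_nonneg ht1) (Real.rpow_nonneg ht0.le _)
      _ = ‖f (x - t)‖ * ((2/ε) * t ^ (-ε/2)) := by rw [hc3]
      _ ≤ ‖f (x - t)‖ * ((2/ε) * 1) := by
          refine mul_le_mul_of_nonneg_left ?_ (norm_nonneg _)
          exact mul_le_mul_of_nonneg_left hc4 (by positivity)
      _ = (2/ε) * ‖f (x - t)‖ := by ring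
  have hbd_int : Integrable (fun t : ℝ => (2/ε) * ‖f (x - t)‖)
      (volume.restrict (Ioi (1:ℝ))) := hint1.const_mul _
  have hdiff : ∀ᵐ (t : ℝ) ∂(volume.restrict (Ioi (1:ℝ))), ∀ z ∈ ball z₀ ε,
      HasDerivAt (fun z => f (x - t) * (t:ℂ) ^ (z - 1))
        (f (x - t) * ((t:ℂ) ^ (z - 1) * Complex.log t)) z := by
    filter_upwards [ae_restrict_mem measurableSet_Ioi] with t ht z _
    have ht0 : (0:ℝ) < t := lt_trans zero_lt_one ht
    have hc : ((t:ℝ):ℂ) ≠ 0 := by exact_mod_cast ht0.ne'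
    have h0 := (hasStrictDerivAt_const_cpow (x := (t:ℂ)) (y := z - 1) (Or.inl hc)).hasDerivAt
    have h2 := h0.comp z ((hasDerivAt_id z).sub_const 1)
    simp only [mul_one] at h2
    exact h2.const_mul (f (x - t))
  have := (hasDerivAt_integral_of_dominated_loc_of_deriv_le (ball_mem_nhds z₀ hε0) (Eventually.of_forall hmeas)
    hFint hF'meas hbound hbd_int hdiff).2
  exact this.differentiableAt


theorem euler_analytic_continuation (f : ℂ → ℂ) (hf : Differentiable ℂ f) (x : ℂ)
    (hint : Integrable (fun t : ℝ => ‖f (x - t)‖) (volume.restrict (Set.Ioi 0)))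
    (hint' : ∀ σ : ℝ, 0 < σ → σ < 1 →
      Integrable (fun t : ℝ => ‖f (x - t)‖ * t ^ (σ - 1)) (volume.restrict (Set.Ioi 0))) :
    (∀ z : ℂ, 0 < z.re → z.re < 1 →
      ∫ t in Set.Ioi (0 : ℝ), f (x - t) * (t : ℂ) ^ (z - 1) =
        (∑' n : ℕ, iteratedDeriv n f x * (-1 : ℂ) ^ n / (n.factorial * (n + z))) +
          ∫ t in Set.Ioi (1 : ℝ), f (x - t) * (t : ℂ) ^ (z - 1)) ∧
    DifferentiableOn ℂ
      (fun z : ℂ => (∑' n : ℕ, iteratedDeriv n f x * (-1 : ℂ) ^ n / (n.factorial * (n + z))) +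
        ∫ t in Set.Ioi (1 : ℝ), f (x - t) * (t : ℂ) ^ (z - 1))
      {z : ℂ | z.re < 1 ∧ ∀ n : ℕ, z ≠ -n} := by
  constructor
  · intro z hz0 hz1
    exact euler_part1 f hf x hint' z hz0 hz1
  · exact (euler_tsum_diff f hf x).add (euler_int_diff f hf x hint)
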